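/- If η ∈ H satisfies (η − η⟨η,η⟩)⟨η,η⟩^{1/2} = 0, then ⟨η,η⟩ is a projection in A. -/

import Mathlib

open scoped RightActions

/-- The December 2024 Mathlib `CStarModule` (right Hilbert C⋆-module, `Aᵐᵒᵖ` acting on `E`). -/
class RightCStarModule (A : Type*) (E : Type*) [NonUnitalSemiring A] [StarRing A]
    [Module ℂ A] [AddCommGroup E] [Module ℂ E] [PartialOrder A] [SMul Aᵐᵒᵖ E] [Norm A] [Norm E]
    extends Inner A E where
  inner_add_right {x} {y} {z} : inner x (y + z) = inner x y + inner x z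
  inner_self_nonneg {x} : 0 ≤ inner x x
  inner_self {x} : inner x x = 0 ↔ x = 0
  inner_op_smul_right {a : A} {x y : E} : inner x (y <• a) = inner x y * a
  inner_smul_right_complex {z : ℂ} {x} {y} : inner x (z • y) = z • inner x y
  star_inner x y : star (inner x y) = inner y x
  norm_eq_sqrt_norm_inner_self x : ‖x‖ = √‖inner x x‖

variable {A E : Type*} [NonUnitalCStarAlgebra A] [PartialOrder A] [StarOrderedRing A]
  [AddCommGroup E] [Module ℂ E] [SMul Aᵐᵒᵖ E] [Norm E] [RightCStarModule A E]

theorem rcm_inner_zero_right (x : E) : inner (𝕜 := A) x (0 : E) = 0 := by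
  have h := RightCStarModule.inner_add_right (A := A) (x := x) (y := (0 : E)) (z := 0)
  simp only [add_zero] at h
  simpa using h

theorem rcm_inner_zero_left (x : E) : inner (𝕜 := A) (0 : E) x = 0 := by
  rw [← RightCStarModule.star_inner x (0 : E), rcm_inner_zero_right, star_zero]

theorem rcm_inner_sub_right (x y z : E) :
    inner (𝕜 := A) x (y - z) = inner (𝕜 := A) x y - inner (𝕜 := A) x z := by
  have h := RightCStarModule.inner_add_right (A := A) (x := x) (y := y - z) (z := z)
  rw [sub_add_cancel] at h
  rw [h]; abel

theorem rcm_inner_sub_left (x y z : E) :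
    inner (𝕜 := A) (x - y) z = inner (𝕜 := A) x z - inner (𝕜 := A) y z := by
  rw [← RightCStarModule.star_inner z (x - y), rcm_inner_sub_right, star_sub,
    RightCStarModule.star_inner, RightCStarModule.star_inner]

theorem rcm_inner_op_smul_left (x y : E) (a : A) :
    inner (𝕜 := A) (x <• a) y = star a * inner (𝕜 := A) x y := by
  rw [← RightCStarModule.star_inner y (x <• a), RightCStarModule.inner_op_smul_right, star_mul,
    RightCStarModule.star_inner]

theorem rcm_isSelfAdjoint_inner_self (x : E) : IsSelfAdjoint (inner (𝕜 := A) x x) :=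
  RightCStarModule.star_inner x x

/-- If `(η − η⟨η,η⟩)⟨η,η⟩^{1/2} = 0`, then `⟨η,η⟩` is a projection in `A`. -/
theorem inner_self_isProjection (η : E)
    (h : (η - η <• (inner (𝕜 := A) η η)) <• CFC.sqrt (inner (𝕜 := A) η η) = 0) :
    IsIdempotentElem (inner (𝕜 := A) η η) ∧ IsSelfAdjoint (inner (𝕜 := A) η η) := by
  set a := inner (𝕜 := A) η η with ha
  have hsa : IsSelfAdjoint a := rcm_isSelfAdjoint_inner_self η
  have hpos : (0 : A) ≤ a := RightCStarModule.inner_self_nonneg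
  refine ⟨?_, hsa⟩
  have h0 : inner (𝕜 := A) ((η - η <• a) <• CFC.sqrt a) ((η - η <• a) <• CFC.sqrt a) = 0 := by
    rw [h]; simp [rcm_inner_zero_left]
  have hsq : star (CFC.sqrt a) = CFC.sqrt a :=
    (IsSelfAdjoint.of_nonneg (CFC.sqrt_nonneg a)).star_eq
  simp only [rcm_inner_op_smul_left, RightCStarModule.inner_op_smul_right,
    rcm_inner_sub_left, rcm_inner_sub_right, hsq, hsa.star_eq, ← ha] at h0
  set s := CFC.sqrt a with hsdef
  have hs : s * s = a := CFC.sqrt_mul_sqrt_self a hpos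
  have key : (a - a * a) * (a - a * a) = 0 := by
    have heq : (a - a * a) * (a - a * a) = (s * (a - a * a) - s * (a - a * a) * a) * s := by
      rw [← hs]; noncomm_ring
    rw [heq]; exact h0
  have hz : a - a * a = 0 := by
    have hsa2 : IsSelfAdjoint (a * a) := by rw [IsSelfAdjoint, star_mul, hsa.star_eq]
    rw [← CStarRing.star_mul_self_eq_zero_iff, (hsa.sub hsa2).star_eq]
    exact key
  exact (sub_eq_zero.mp hz).symm
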